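/- Every bounded automorphism of the regular rooted d-ary tree T has finite orbit-signalizer. -/

import Mathlib

open List

/-- Vertices of the rooted `d`-ary tree `T`: finite words over the alphabet
`X = Fin d`. -/
abbrev Vertex (d : ℕ) := List (Fin d)

/-- `g` is an automorphism of the rooted `d`-ary tree: a bijection of the
vertex set `X*` preserving word length and the prefix relation. -/
def IsTreeAut {d : ℕ} (g : Equiv.Perm (Vertex d)) : Prop :=
  (∀ v : Vertex d, (g v).length = v.length) ∧
    ∀ v w : Vertex d, g v <+: g (v ++ w)

theorem IsTreeAut.prefix_mono {d : ℕ} {g : Equiv.Perm (Vertex d)} (hg : IsTreeAut g)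
    {u u' : Vertex d} (h : u <+: u') : g u <+: g u' := by
  obtain ⟨t, rfl⟩ := h
  exact hg.2 u t

/-- The automorphism group `Aut(T)` of the rooted `d`-ary tree, as a subgroup
of the group of permutations of the vertex set. -/
def treeAut (d : ℕ) : Subgroup (Equiv.Perm (Vertex d)) where
  carrier := {g | IsTreeAut g}
  one_mem' := ⟨fun _ => rfl, fun v w => ⟨w, rfl⟩⟩
  mul_mem' := by
    intro g h hg hh
    obtain ⟨hg1, hg2⟩ := hg
    obtain ⟨hh1, hh2⟩ := hh
    refine ⟨fun v => ?_, fun v w => ?_⟩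
    · simp [Equiv.Perm.mul_apply, hg1, hh1]
    · obtain ⟨t, ht⟩ := hh2 v w
      simp only [Equiv.Perm.mul_apply]
      rw [← ht]
      exact hg2 (h v) t
  inv_mem' := by
    intro g hgmem
    obtain ⟨hg1, hg2⟩ := hgmem
    have hg : IsTreeAut g := ⟨hg1, hg2⟩
    have hlen' : ∀ v : Vertex d, (g⁻¹ v).length = v.length := by
      intro v
      conv_rhs => rw [← (show ∀ x, g (g⁻¹ x) = x from g.apply_symm_apply) v]
      rw [hg1]
    refine ⟨hlen', fun v w => ?_⟩
    have hle : (g⁻¹ v).length ≤ (g⁻¹ (v ++ w)).length := by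
      have h1 := hlen' v
      have h2 := hlen' (v ++ w)
      rw [List.length_append] at h2
      omega
    have htp : (g⁻¹ (v ++ w)).take (g⁻¹ v).length <+: g⁻¹ (v ++ w) :=
      List.take_prefix _ _
    have hgtp : g ((g⁻¹ (v ++ w)).take (g⁻¹ v).length) <+: v ++ w := by
      have := hg.prefix_mono htp
      rwa [show ∀ x, g (g⁻¹ x) = x from g.apply_symm_apply] at this
    have hlen_tp : (g ((g⁻¹ (v ++ w)).take (g⁻¹ v).length)).length = v.length := by
      rw [hg1, List.length_take, min_eq_left hle, hlen' v]
    have hveq : g ((g⁻¹ (v ++ w)).take (g⁻¹ v).length) = v := by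
      have h1 := List.prefix_iff_eq_take.mp hgtp
      have h2 := List.prefix_iff_eq_take.mp (List.prefix_append v w)
      rw [h1, hlen_tp]
      exact h2.symm
    have hkey : (g⁻¹ (v ++ w)).take (g⁻¹ v).length = g⁻¹ v := by
      apply g.injective
      rw [hveq, show ∀ x, g (g⁻¹ x) = x from g.apply_symm_apply]
    rw [← hkey]
    exact htp

open scoped Classical in
/-- The state (section) `g|_v` of `g` at the vertex `v` : the unique
automorphism satisfying `g (v ++ w) = g v ++ (g|_v) w` for all `w`. -/
noncomputable def state {d : ℕ} (g : Equiv.Perm (Vertex d)) (v : Vertex d) :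
    Equiv.Perm (Vertex d) :=
  if h : Function.Bijective (fun w : Vertex d => (g (v ++ w)).drop v.length) then
    Equiv.ofBijective _ h
  else 1

/-- A finite-state automorphism: one having finitely many states.  The
finite-state automorphisms form the group `F(X)`. -/
def FiniteState {d : ℕ} (g : Equiv.Perm (Vertex d)) : Prop :=
  (Set.range fun v : Vertex d => state g v).Finite

/-- The cardinality of the orbit `Orb_a(v)` of the vertex `v` under the cyclic
group generated by `a`. -/
noncomputable def orbitCard {d : ℕ} (a : Equiv.Perm (Vertex d)) (v : Vertex d) : ℕ :=
  Nat.card (Set.range fun n : ℤ => (a ^ n) v)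

/-- The orbit-signalizer `OS(a) = { a^m|_v : v ∈ X^*, m = |Orb_a(v)| }`. -/
noncomputable def OS {d : ℕ} (a : Equiv.Perm (Vertex d)) : Set (Equiv.Perm (Vertex d)) :=
  {s | ∃ v : Vertex d, s = state (a ^ orbitCard a v) v}

/-- `a` has finite orbit-signalizer. -/
def FiniteOS {d : ℕ} (a : Equiv.Perm (Vertex d)) : Prop := (OS a).Finite

/-- A self-similar (state-closed) subgroup. -/
def SelfSimilar {d : ℕ} (G : Subgroup (Equiv.Perm (Vertex d))) : Prop :=
  ∀ g ∈ G, ∀ v : Vertex d, state g v ∈ G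

/-- A contracting group: there is a finite set `N ⊆ G` such that every
`g ∈ G` has all its states in `N` from some level on. -/
def ContractingGroup {d : ℕ} (G : Subgroup (Equiv.Perm (Vertex d))) : Prop :=
  ∃ N : Set (Equiv.Perm (Vertex d)), N.Finite ∧ N ⊆ (G : Set (Equiv.Perm (Vertex d))) ∧
    ∀ g ∈ G, ∃ n : ℕ, ∀ v : Vertex d, n ≤ v.length → state g v ∈ N

/-- A contracting automorphism: the self-similar group generated by all of its
states is contracting. -/
def ContractingAut {d : ℕ} (f : Equiv.Perm (Vertex d)) : Prop :=
  ContractingGroup (Subgroup.closure (Set.range fun v : Vertex d => state f v))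

/-- The activity sequence `θ_k(g)`: the number of vertices `v` of level `k`
whose state `g|_v` acts nontrivially on the first level `X`. -/
noncomputable def theta {d : ℕ} (g : Equiv.Perm (Vertex d)) (k : ℕ) : ℕ :=
  Nat.card {v : Vertex d // v.length = k ∧ ∃ x : Fin d, state g v [x] ≠ [x]}

/-- A bounded automorphism: a finite-state automorphism with bounded activity
sequence.  The bounded automorphisms form the group `Pol(0)`. -/
def BoundedAut {d : ℕ} (g : Equiv.Perm (Vertex d)) : Prop :=
  FiniteState g ∧ ∃ C : ℕ, ∀ k : ℕ, theta g k ≤ C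

/-- A polynomial automorphism (an element of `Pol(∞)`): a finite-state
automorphism whose activity sequence is polynomially bounded. -/
def PolyAut {d : ℕ} (g : Equiv.Perm (Vertex d)) : Prop :=
  FiniteState g ∧ ∃ p : Polynomial ℕ, ∀ k : ℕ, theta g k ≤ p.eval k

/-- A finitary automorphism (an element of `Pol(-1)`): all states at some
level are trivial. -/
def Finitary {d : ℕ} (g : Equiv.Perm (Vertex d)) : Prop :=
  ∃ k : ℕ, ∀ v : Vertex d, v.length = k → state g v = 1

/-- A functionally recursive automorphism: a member of some finitely generated
self-similar subgroup of `Aut(T)`.  These form the group `FR(X)`. -/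
def FunctionallyRecursive {d : ℕ} (g : Equiv.Perm (Vertex d)) : Prop :=
  ∃ G : Subgroup (Equiv.Perm (Vertex d)), G ≤ treeAut d ∧ SelfSimilar G ∧
    (∃ S : Set (Equiv.Perm (Vertex d)), S.Finite ∧ G = Subgroup.closure S) ∧ g ∈ G
section AuxSec

variable {d : ℕ} {g h s : Equiv.Perm (Vertex d)}

lemma IsTreeAut.mem_treeAut (hg : IsTreeAut g) : g ∈ treeAut d := hg

lemma IsTreeAut.inv (hg : IsTreeAut g) : IsTreeAut g⁻¹ := (treeAut d).inv_mem hg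

lemma IsTreeAut.pow (hg : IsTreeAut g) (n : ℕ) : IsTreeAut (g ^ n) :=
  (treeAut d).pow_mem hg n

lemma IsTreeAut.take_eq (hg : IsTreeAut g) (v w : Vertex d) :
    g (v ++ w) = g v ++ (g (v ++ w)).drop v.length := by
  have hp := hg.2 v w
  have h1 : g v = (g (v ++ w)).take (g v).length := List.prefix_iff_eq_take.mp hp
  conv_lhs => rw [← List.take_append_drop (g v).length (g (v ++ w))]
  rw [← h1, hg.1 v]

lemma IsTreeAut.sec_bijective (hg : IsTreeAut g) (v : Vertex d) :
    Function.Bijective (fun w : Vertex d => (g (v ++ w)).drop v.length) := by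
  constructor
  · intro w w' hww
    have h1 := hg.take_eq v w
    have h2 := hg.take_eq v w'
    simp only at hww
    rw [hww, ← h2] at h1
    exact List.append_cancel_left (g.injective h1)
  · intro u
    have hginv : IsTreeAut g⁻¹ := hg.inv
    have hpre : g⁻¹ (g v) <+: g⁻¹ (g v ++ u) := hginv.prefix_mono ⟨u, rfl⟩
    rw [show ∀ x, g⁻¹ (g x) = x from g.symm_apply_apply] at hpre
    refine ⟨(g⁻¹ (g v ++ u)).drop v.length, ?_⟩
    obtain ⟨t, ht⟩ := hpre
    have hvw : v ++ (g⁻¹ (g v ++ u)).drop v.length = g⁻¹ (g v ++ u) := by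
      rw [← ht, List.drop_left]
    simp only [hvw, show ∀ x, g (g⁻¹ x) = x from g.apply_symm_apply]
    rw [← hg.1 v]
    exact List.drop_left

lemma IsTreeAut.state_apply (hg : IsTreeAut g) (v w : Vertex d) :
    state g v w = (g (v ++ w)).drop v.length := by
  rw [state, dif_pos (hg.sec_bijective v)]
  rfl

lemma IsTreeAut.state_spec (hg : IsTreeAut g) (v w : Vertex d) :
    g (v ++ w) = g v ++ state g v w := by
  rw [hg.state_apply v w]
  exact hg.take_eq v w

lemma IsTreeAut.state_unique (hg : IsTreeAut g) {v : Vertex d}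
    {e : Equiv.Perm (Vertex d)} (he : ∀ w, g (v ++ w) = g v ++ e w) :
    e = state g v := by
  refine Equiv.ext fun w => ?_
  have h1 := he w
  rw [hg.state_spec v w] at h1
  exact (List.append_cancel_left h1).symm

lemma IsTreeAut.state_isTreeAut (hg : IsTreeAut g) (v : Vertex d) :
    IsTreeAut (state g v) := by
  constructor
  · intro w
    have h1 := congrArg List.length (hg.state_spec v w)
    rw [hg.1, List.length_append, List.length_append, hg.1] at h1
    omega
  · intro w u
    have hp : g (v ++ w) <+: g (v ++ (w ++ u)) := by
      rw [← List.append_assoc]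
      exact hg.2 (v ++ w) u
    rw [hg.state_spec v w, hg.state_spec v (w ++ u)] at hp
    exact (List.prefix_append_right_inj _).mp hp

lemma state_one (v : Vertex d) : state (1 : Equiv.Perm (Vertex d)) v = 1 := by
  have h1 : IsTreeAut (1 : Equiv.Perm (Vertex d)) := (treeAut d).one_mem
  exact (h1.state_unique (fun w => by simp)).symm

lemma IsTreeAut.state_mul (hg : IsTreeAut g) (hh : IsTreeAut h) (v : Vertex d) :
    state (g * h) v = state g (h v) * state h v := by
  have hgh : IsTreeAut (g * h) := (treeAut d).mul_mem hg hh
  refine (hgh.state_unique fun w => ?_).symm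
  simp only [Equiv.Perm.mul_apply]
  rw [hh.state_spec v w, hg.state_spec (h v) (state h v w)]

lemma IsTreeAut.state_state (hg : IsTreeAut g) (v w : Vertex d) :
    state g (v ++ w) = state (state g v) w := by
  refine (hg.state_unique fun u => ?_).symm
  rw [List.append_assoc, hg.state_spec v (w ++ u),
    (hg.state_isTreeAut v).state_spec w u, hg.state_spec v w, List.append_assoc]

end AuxSec
section AuxOrbit

variable {d : ℕ} {a s : Equiv.Perm (Vertex d)}

lemma state_pow_prod (ha : IsTreeAut a) (v : Vertex d) (m : ℕ) :
    state (a ^ m) v =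
      (((List.range m).map fun i => state a ((a ^ i) v)).reverse).prod := by
  induction m with
  | zero => simp [state_one]
  | succ n ih =>
    have h1 : a ^ (n + 1) = a * a ^ n := by rw [pow_succ']
    rw [h1, ha.state_mul (ha.pow n) v, ih, List.range_succ]
    simp

lemma exists_active (hs : IsTreeAut s) (hne : s ≠ 1) :
    ∃ w : Vertex d, ∃ x : Fin d, state s w [x] ≠ [x] := by
  by_contra hcon
  push_neg at hcon
  refine hne (Equiv.ext fun u => ?_)
  induction u using List.reverseRecOn with
  | nil =>
    have := hs.1 []
    simpa using List.length_eq_zero_iff.mp this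
  | append_singleton w x ih =>
    rw [hs.state_spec w [x], ih, hcon w x]
    rfl

lemma exists_pos_period (ha : IsTreeAut a) (v : Vertex d) :
    ∃ n : ℕ, 0 < n ∧ (a ^ n) v = v := by
  haveI : Finite {l : Vertex d // l.length = v.length} :=
    (List.finite_length_eq (Fin d) v.length).to_subtype
  obtain ⟨i, j, hij, hfe⟩ := Finite.exists_ne_map_eq_of_infinite
    (fun n : ℕ => (⟨(a ^ n) v, (ha.pow n).1 v⟩ : {l : Vertex d // l.length = v.length}))
  have heq : (a ^ i) v = (a ^ j) v := congrArg Subtype.val hfe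
  rcases lt_or_gt_of_ne hij with h | h
  · refine ⟨j - i, by omega, ?_⟩
    have : (a ^ i) ((a ^ (j - i)) v) = (a ^ i) v := by
      rw [← Equiv.Perm.mul_apply, ← pow_add]
      rw [show i + (j - i) = j by omega]
      exact heq.symm
    exact (a ^ i).injective this
  · refine ⟨i - j, by omega, ?_⟩
    have : (a ^ j) ((a ^ (i - j)) v) = (a ^ j) v := by
      rw [← Equiv.Perm.mul_apply, ← pow_add]
      rw [show j + (i - j) = i by omega]
      exact heq
    exact (a ^ j).injective this

lemma orbitCard_inj (ha : IsTreeAut a) (v : Vertex d) :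
    ∀ i j : ℕ, i < orbitCard a v → j < orbitCard a v →
      (a ^ i) v = (a ^ j) v → i = j := by
  classical
  set p := Nat.find (exists_pos_period ha v) with hp
  have hppos : 0 < p := (Nat.find_spec (exists_pos_period ha v)).1
  have hfix : (a ^ p) v = v := (Nat.find_spec (exists_pos_period ha v)).2
  have hmin : ∀ n : ℕ, 0 < n → n < p → (a ^ n) v ≠ v := by
    intro n h1 h2 he
    exact Nat.find_min (exists_pos_period ha v) h2 ⟨h1, he⟩
  -- injectivity of i ↦ a^i v on [0, p)
  have hinj : ∀ i j : ℕ, i < p → j < p → (a ^ i) v = (a ^ j) v → i = j := by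
    have key : ∀ i j : ℕ, i ≤ j → j < p → (a ^ i) v = (a ^ j) v → i = j := by
      intro i j hij hjp he
      by_contra hne
      have hlt : i < j := lt_of_le_of_ne hij hne
      have : (a ^ i) ((a ^ (j - i)) v) = (a ^ i) v := by
        rw [← Equiv.Perm.mul_apply, ← pow_add, show i + (j - i) = j by omega]
        exact he.symm
      exact hmin (j - i) (by omega) (by omega) ((a ^ i).injective this)
    intro i j hi hj he
    rcases le_total i j with h | h
    · exact key i j h hj he
    · exact (key j i h hi he.symm).symm
  -- every ℤ-power lands in the first p powers
  have hsurj : ∀ n : ℤ, ∃ i : ℕ, i < p ∧ (a ^ n) v = (a ^ i) v := by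
    intro n
    have hfixZ : ∀ q : ℤ, ((a ^ p) ^ q) v = v :=
      fun q => Function.IsFixedPt.perm_zpow hfix q
    have hr0 : 0 ≤ n % (p : ℤ) := Int.emod_nonneg n (by exact_mod_cast hppos.ne')
    have hrp : n % (p : ℤ) < (p : ℤ) := Int.emod_lt_of_pos n (by exact_mod_cast hppos)
    refine ⟨(n % (p : ℤ)).toNat, by omega, ?_⟩
    have hn : n = n % (p : ℤ) + (p : ℤ) * (n / (p : ℤ)) := (Int.emod_add_mul_ediv n p).symm
    calc (a ^ n) v = (a ^ (n % (p : ℤ) + (p : ℤ) * (n / (p : ℤ)))) v := by rw [← hn]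
      _ = (a ^ (n % (p : ℤ))) ((a ^ ((p : ℤ) * (n / (p : ℤ)))) v) := by
            rw [zpow_add, Equiv.Perm.mul_apply]
      _ = (a ^ (n % (p : ℤ))) v := by
            rw [zpow_mul, zpow_natCast]
            exact congrArg _ (hfixZ _)
      _ = (a ^ (n % (p : ℤ)).toNat) v := by
            rw [← zpow_natCast a (n % (p : ℤ)).toNat, Int.toNat_of_nonneg hr0]
  -- the orbit equals the image of Fin p
  have hcard : orbitCard a v = p := by
    have hbij : Function.Bijective
        (fun i : Fin p => (⟨(a ^ (i : ℕ)) v, ⟨(i : ℤ), by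
          simp [zpow_natCast]⟩⟩ : Set.range fun n : ℤ => (a ^ n) v)) := by
      constructor
      · intro i j hij
        have := congrArg Subtype.val hij
        exact Fin.ext (hinj i j i.2 j.2 this)
      · rintro ⟨u, n, rfl⟩
        obtain ⟨i, hi, he⟩ := hsurj n
        exact ⟨⟨i, hi⟩, Subtype.ext he.symm⟩
    have := Nat.card_eq_of_bijective _ hbij
    rw [Nat.card_eq_fintype_card, Fintype.card_fin] at this
    exact this.symm
  rw [hcard]
  exact hinj

end AuxOrbit
section AuxProd

open scoped Classical

lemma prod_filter_ne_one {M : Type*} [Monoid M] (l : List M) :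
    (l.filter fun x => decide (x ≠ 1)).prod = l.prod := by
  induction l with
  | nil => rfl
  | cons x t ih =>
    simp only [ne_eq, decide_not] at ih
    by_cases hx : x = 1
    · simp [List.filter_cons, hx, ih]
    · simp [List.filter_cons, hx, ih]

lemma finite_prod_le {M : Type*} [Monoid M] {S : Set M} (hS : S.Finite) (n : ℕ) :
    {g : M | ∃ l : List M, l.length ≤ n ∧ (∀ x ∈ l, x ∈ S) ∧ l.prod = g}.Finite := by
  induction n with
  | zero =>
    refine (Set.finite_singleton 1).subset ?_
    rintro g ⟨l, hl, -, rfl⟩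
    simp only [Nat.le_zero, List.length_eq_zero_iff] at hl
    simp [hl]
  | succ n ih =>
    refine (ih.union (Set.Finite.image2 (· * ·) hS ih)).subset ?_
    rintro g ⟨l, hl, hmem, rfl⟩
    cases l with
    | nil => exact Or.inl ⟨[], by simp⟩
    | cons x t =>
      refine Or.inr ⟨x, hmem x (by simp), t.prod, ⟨t, ?_, ?_, rfl⟩, by simp⟩
      · simpa using Nat.succ_le_succ_iff.mp hl
      · exact fun y hy => hmem y (List.mem_cons_of_mem x hy)

lemma countP_list_range (q : ℕ → Bool) (m : ℕ) :
    List.countP q (List.range m) = ((Finset.range m).filter fun i => q i = true).card := by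
  induction m with
  | zero => simp
  | succ n ih =>
    rw [List.range_succ, List.countP_append, Finset.range_add_one, Finset.filter_insert]
    by_cases h : q n = true
    · rw [if_pos h, Finset.card_insert_of_notMem (by simp)]
      simp [List.countP_cons, h, ih]
    · rw [if_neg h]
      simp [List.countP_cons, h, ih]

end AuxProd
/-- Every bounded automorphism of the regular rooted `d`-ary
tree has finite orbit-signalizer. -/
theorem finiteOS_of_bounded
    (d : ℕ) (hd : 2 ≤ d) (a : Equiv.Perm (Vertex d))
    (ha : IsTreeAut a) (hba : BoundedAut a) :
    FiniteOS a := by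
  classical
  obtain ⟨hfs, C, hC⟩ := hba
  have hS'fin : (Set.range fun v : Vertex d => state a v).Finite := hfs
  -- active sets at each level
  set A : ℕ → Set (Vertex d) :=
    fun k => {v | v.length = k ∧ ∃ x : Fin d, state a v [x] ≠ [x]} with hAdef
  have hAfin : ∀ k, (A k).Finite := fun k =>
    (List.finite_length_eq (Fin d) k).subset fun v hv => hv.1
  have hAcard : ∀ k, (A k).ncard ≤ C := by
    intro k
    have h1 : theta a k = Nat.card ↑(A k) := rfl
    have h2 := hC k
    rwa [h1, Nat.card_coe_set_eq] at h2
  -- witness function for activity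
  set W : Equiv.Perm (Vertex d) → Vertex d := fun s =>
    if h : ∃ w : Vertex d, ∃ x : Fin d, state s w [x] ≠ [x] then h.choose else []
    with hWdef
  have hWspec : ∀ s : Equiv.Perm (Vertex d), IsTreeAut s → s ≠ 1 →
      ∃ x : Fin d, state s (W s) [x] ≠ [x] := by
    intro s hs hne
    have h := exists_active hs hne
    simp only [hWdef, dif_pos h]
    exact h.choose_spec
  set L : ℕ := hS'fin.toFinset.sup fun s => (W s).length with hLdef
  have hWL : ∀ v : Vertex d, (W (state a v)).length ≤ L :=
    fun v => Finset.le_sup (f := fun s => (W s).length)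
      (hS'fin.mem_toFinset.mpr ⟨v, rfl⟩)
  -- nontrivial-state sets at each level
  set NT : ℕ → Set (Vertex d) :=
    fun k => {v | v.length = k ∧ state a v ≠ 1} with hNTdef
  have hNTfin : ∀ k, (NT k).Finite := fun k =>
    (List.finite_length_eq (Fin d) k).subset fun v hv => hv.1
  have hNTcard : ∀ k, ((hNTfin k).toFinset).card ≤ (L + 1) * C := by
    intro k
    have step : ((hNTfin k).toFinset).card ≤
        ((Finset.range (L + 1)).biUnion fun j => (hAfin (k + j)).toFinset).card := by
      apply Finset.card_le_card_of_injOn (fun v => v ++ W (state a v))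
      · intro v hv
        rw [Finset.mem_coe, Set.Finite.mem_toFinset] at hv
        obtain ⟨hvlen, hvne⟩ := hv
        have hx := hWspec (state a v) (ha.state_isTreeAut v) hvne
        rw [Finset.mem_coe, Finset.mem_biUnion]
        refine ⟨(W (state a v)).length,
          Finset.mem_range.mpr (by have := hWL v; omega), ?_⟩
        rw [Set.Finite.mem_toFinset]
        refine ⟨by rw [List.length_append, hvlen], ?_⟩
        rw [ha.state_state v (W (state a v))]
        exact hx
      · intro v hv v' hv' he
        rw [Finset.mem_coe, Set.Finite.mem_toFinset] at hv hv'
        have h1 : (v ++ W (state a v)).take k = v := by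
          conv_rhs => rw [← List.take_left (l₁ := v) (l₂ := W (state a v))]
          rw [hv.1]
        have h2 : (v' ++ W (state a v')).take k = v' := by
          conv_rhs => rw [← List.take_left (l₁ := v') (l₂ := W (state a v'))]
          rw [hv'.1]
        rw [← h1, ← h2]
        exact congrArg (List.take k) he
    refine step.trans (Finset.card_biUnion_le.trans ?_)
    have hsum : ∀ j ∈ Finset.range (L + 1), ((hAfin (k + j)).toFinset).card ≤ C := by
      intro j _
      rw [← Set.ncard_eq_toFinset_card (A (k + j)) (hAfin (k + j))]
      exact hAcard (k + j)
    calc ∑ j ∈ Finset.range (L + 1), ((hAfin (k + j)).toFinset).card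
        ≤ ∑ _j ∈ Finset.range (L + 1), C := Finset.sum_le_sum hsum
      _ = (L + 1) * C := by rw [Finset.sum_const, Finset.card_range, smul_eq_mul]
  -- conclude
  apply Set.Finite.subset (finite_prod_le hS'fin ((L + 1) * C))
  rintro s ⟨v, rfl⟩
  set m := orbitCard a v with hm
  set f : ℕ → Equiv.Perm (Vertex d) := fun i => state a ((a ^ i) v) with hfdef
  refine ⟨(((List.range m).map f).reverse).filter fun x => decide (x ≠ 1), ?_, ?_, ?_⟩
  · -- length bound
    rw [← List.countP_eq_length_filter, List.countP_reverse, List.countP_map,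
      countP_list_range]
    refine le_trans ?_ (hNTcard v.length)
    apply Finset.card_le_card_of_injOn (fun i => (a ^ i) v)
    · intro i hi
      rw [Finset.mem_coe, Finset.mem_filter] at hi
      obtain ⟨hir, hine⟩ := hi
      rw [Finset.mem_coe, Set.Finite.mem_toFinset]
      refine ⟨(ha.pow i).1 v, ?_⟩
      simpa using hine
    · intro i hi j hj he
      rw [Finset.mem_coe, Finset.mem_filter, Finset.mem_range] at hi hj
      exact orbitCard_inj ha v i j hi.1 hj.1 he
  · intro x hx
    have hx' := List.mem_of_mem_filter hx
    rw [List.mem_reverse, List.mem_map] at hx'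
    obtain ⟨i, _, rfl⟩ := hx'
    exact ⟨_, rfl⟩
  · rw [prod_filter_ne_one]
    exact (state_pow_prod ha v m).symm
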